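/- Let T_δ be a string of length δ ≥ 1 ending with a unique smallest character $, let L_δ be its BWT with rep the position of $ in L_δ (L_δ[rep] = $), and let c be a character with $ < c. Form T_{δ+1} = c·T_δ' where T_δ' is T_δ with $ removed from the end and re-appended (i.e., T_{δ+1} is obtained by prepending c before T_δ's content, keeping $ last). Then the BWT L_{δ+1} of T_{δ+1} is obtained from L_δ by replacing the character $ at position rep with c and then inserting $ at position ins = occ_<(L_δ, c) + rank(L_δ, rep, c) + 1. -/

import Mathlib

private lemma perm_pairwise_eq {α : Type*} {r : α → α → Prop} :
    ∀ {l₁ l₂ : List α}, l₁.Perm l₂ → l₁.Pairwise r → l₂.Pairwise r →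
      (∀ a ∈ l₁, ∀ b ∈ l₁, r a b → r b a → a = b) → l₁ = l₂ := by
  intro l₁
  induction l₁ with
  | nil => intro l₂ p _ _ _; exact p.nil_eq
  | cons a t₁ ih =>
    intro l₂ p s₁ s₂ anti
    cases l₂ with
    | nil => exact absurd p.symm (by simp)
    | cons b t₂ =>
      have ha2 : a ∈ b :: t₂ := p.subset (List.mem_cons_self (a := a) (l := t₁))
      have hb1 : b ∈ a :: t₁ := p.symm.subset (List.mem_cons_self (a := b) (l := t₂))
      have hab : a = b := by
        rcases List.mem_cons.mp ha2 with h | h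
        · exact h
        rcases List.mem_cons.mp hb1 with h' | h'
        · exact h'.symm
        · exact anti a (List.mem_cons_self (a := a) (l := t₁)) b (List.mem_cons_of_mem _ h')
            ((List.pairwise_cons.mp s₁).1 b h') ((List.pairwise_cons.mp s₂).1 a h)
      subst hab
      have pt : t₁.Perm t₂ := (List.perm_cons a).mp p
      have := ih pt (List.pairwise_cons.mp s₁).2 (List.pairwise_cons.mp s₂).2
        (fun x hx y hy => anti x (List.mem_cons_of_mem _ hx) y (List.mem_cons_of_mem _ hy))
      rw [this]

private lemma insertIdx_eq_take_cons_drop' {α : Type*} (a : α) :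
    ∀ (k : ℕ) (l : List α), k ≤ l.length → l.insertIdx k a = l.take k ++ a :: l.drop k
  | 0, l, _ => by simp
  | k+1, [], h => by simp at h
  | k+1, x :: l, h => by
    simp only [List.insertIdx_succ_cons, List.take_succ_cons, List.drop_succ_cons,
      List.cons_append]
    rw [insertIdx_eq_take_cons_drop' a k l (by simpa using h)]

private lemma countP_or_disjoint {α : Type*} (A B : α → Bool) (l : List α)
    (h : ∀ a ∈ l, ¬(A a = true ∧ B a = true)) :
    l.countP (fun a => A a || B a) = l.countP A + l.countP B := by
  induction l with
  | nil => simp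
  | cons x t ih =>
    simp only [List.countP_cons]
    rw [ih (fun a ha => h a (List.mem_cons_of_mem _ ha))]
    have := h x (List.mem_cons_self (a := x) (l := t))
    cases hA : A x <;> cases hB : B x <;> simp_all <;> omega

private lemma take_countP_sorted {α : Type*} {r : α → α → Prop} {p : α → Bool}
    (hdc : ∀ a b, r a b → p b = true → p a = true) :
    ∀ {l : List α}, l.Pairwise r →
      (∀ x ∈ l.take (l.countP p), p x = true) ∧ (∀ x ∈ l.drop (l.countP p), p x = false) := by
  intro l
  induction l with
  | nil => simp
  | cons a t ih =>
    intro hs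
    have hrt : ∀ x ∈ t, r a x := (List.pairwise_cons.mp hs).1
    have ht := ih (List.pairwise_cons.mp hs).2
    cases hpa : p a with
    | false =>
      have hz : (a :: t).countP p = 0 := List.countP_eq_zero.mpr (by
        intro x hx
        rcases List.mem_cons.mp hx with rfl | hx
        · simp [hpa]
        · intro hpx
          have := hdc a x (hrt x hx) hpx
          simp [hpa] at this)
      rw [hz]
      constructor
      · simp
      · intro x hx
        simp only [List.drop_zero] at hx
        rcases List.mem_cons.mp hx with rfl | hx
        · exact hpa
        · by_contra hh
          have hpx : p x = true := by simpa using hh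
          have := hdc a x (hrt x hx) hpx
          simp [hpa] at this
    | true =>
      rw [List.countP_cons_of_pos (p := p) (l := t) hpa]
      constructor
      · intro x hx
        rw [List.take_succ_cons] at hx
        rcases List.mem_cons.mp hx with rfl | hx
        · exact hpa
        · exact ht.1 x hx
      · intro x hx
        rw [List.drop_succ_cons] at hx
        exact ht.2 x hx

private lemma cons_lt_cons_iff_of_eq {α : Type*} [LinearOrder α] (a : α) (l m : List α) :
    (a :: l) < (a :: m) ↔ l < m :=
  List.cons_lt_cons_self

private lemma cons_lt_cons_of_lt {α : Type*} [LinearOrder α] {a b : α} (h : a < b)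
    (l m : List α) : (a :: l) < (b :: m) :=
  List.Lex.rel h

/-- The Burrows–Wheeler transform of a list: sort the suffix starting positions
lexicographically, and take the cyclically preceding character of each. -/
def bwt {α : Type*} [LinearOrder α] [Inhabited α] (T : List α) : List α :=
  ((List.range T.length).mergeSort (fun i j => decide (T.drop i ≤ T.drop j))).map
    (fun i => T.getD ((i + T.length - 1) % T.length) default)

theorem bwt_extension {α : Type*} [LinearOrder α] [Inhabited α] (T : List α)
    (hne : T ≠ [])
    (hsmall : ∀ i : Fin T.length, (i : ℕ) < T.length - 1 → T.getLast hne < T.get i)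
    (c : α) (hc : T.getLast hne < c)
    (rep : ℕ) (hrep : rep < (bwt T).length)
    (hrepc : (bwt T)[rep]'hrep = T.getLast hne) :
    bwt (c :: T) =
      ((bwt T).set rep c).insertIdx
        (((bwt T).countP (fun x => decide (x < c))) + (((bwt T).take (rep + 1)).count c))
        (T.getLast hne) := by
  classical
  have hn : 0 < T.length := List.length_pos_iff.mpr hne
  set d := T.getLast hne with hd_def
  set le : ℕ → ℕ → Bool := fun i j => decide (T.drop i ≤ T.drop j) with hle_def
  set s : List ℕ := (List.range T.length).mergeSort le with hs_def
  set f : ℕ → α := fun i => T.getD ((i + T.length - 1) % T.length) default with hf_def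
  have hbwt : bwt T = s.map f := rfl
  -- basic facts about the sentinel character d
  have hd_idx : ∀ (hk : T.length - 1 < T.length), T[T.length-1]'hk = d := by
    intro hk; rw [hd_def, List.getLast_eq_getElem]
  have hdlt : ∀ (k : ℕ) (hk : k < T.length), k ≠ T.length - 1 → d < T[k]'hk := by
    intro k hk hkne
    have := hsmall ⟨k, hk⟩ (by simp only; omega)
    simpa [List.get_eq_getElem] using this
  have hdu : ∀ (k : ℕ) (hk : k < T.length), T[k]'hk = d → k = T.length - 1 := by
    intro k hk h
    by_contra hkne
    exact (hdlt k hk hkne).ne' h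
  -- antisymmetry of suffix comparison on indices
  have hanti : ∀ i j : ℕ, i ≤ T.length → j ≤ T.length → T.drop i ≤ T.drop j →
      T.drop j ≤ T.drop i → i = j := by
    intro i j hi hj h1 h2
    have heq := le_antisymm h1 h2
    have hlen := congrArg List.length heq
    simp only [List.length_drop] at hlen
    omega
  -- facts about s
  have hs_perm : s.Perm (List.range T.length) := List.mergeSort_perm _ _
  have hs_len : s.length = T.length := by rw [hs_perm.length_eq, List.length_range]
  have hs_mem : ∀ x ∈ s, x < T.length := fun x hx => List.mem_range.mp (hs_perm.subset hx)
  have hs_nodup : s.Nodup := hs_perm.nodup_iff.mpr (List.nodup_range (n := T.length))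
  have hs_sorted : s.Pairwise (fun i j => T.drop i ≤ T.drop j) := by
    have h := List.pairwise_mergeSort (le := le)
      (fun a b c hab hbc => by
        simp only [hle_def, decide_eq_true_eq] at hab hbc ⊢
        exact le_trans hab hbc)
      (fun a b => by
        simp only [hle_def, Bool.or_eq_true, decide_eq_true_eq]
        exact le_total _ _)
      (List.range T.length)
    exact h.imp (fun hab => by simpa [hle_def] using hab)
  -- values of f
  have hf0 : f 0 = d := by
    have h1 : (0 + T.length - 1) % T.length = T.length - 1 := by
      rw [Nat.zero_add]; exact Nat.mod_eq_of_lt (by omega)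
    simp only [hf_def, h1]
    rw [List.getD_eq_getElem _ _ (by omega)]
    exact hd_idx (by omega)
  have hfi : ∀ i : ℕ, 1 ≤ i → i < T.length → f i = T.getD (i - 1) default := by
    intro i h1 h2
    have h4 : (i + T.length - 1) % T.length = i - 1 := by
      have h3 : i + T.length - 1 = (i - 1) + T.length := by omega
      rw [h3, Nat.add_mod_right, Nat.mod_eq_of_lt (by omega)]
    simp only [hf_def, h4]
  have hlen_bwt : (bwt T).length = T.length := by rw [hbwt, List.length_map, hs_len]
  have hrepn : rep < T.length := hlen_bwt ▸ hrep
  have hreps : rep < s.length := by rw [hs_len]; exact hrepn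
  have hbwt_get : ∀ (k : ℕ) (hk : k < T.length),
      (bwt T)[k]'(by rw [hlen_bwt]; exact hk) = f (s[k]'(by rw [hs_len]; exact hk)) := by
    intro k hk
    simp [hbwt]
  have hsrep0 : s[rep]'hreps = 0 := by
    have h1 : f (s[rep]'hreps) = d := by rw [← hbwt_get rep hrepn]; exact hrepc
    by_contra h0
    have hlt : s[rep]'hreps < T.length := hs_mem _ (List.getElem_mem _)
    have h2 : 1 ≤ s[rep]'hreps := by omega
    rw [hfi _ h2 hlt, List.getD_eq_getElem _ _ (by omega)] at h1
    have := hdu _ (by omega) h1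
    omega
  have hrep_uniq : ∀ (k : ℕ) (hk : k < s.length), s[k]'hk = 0 → k = rep := by
    intro k hk h
    exact (hs_nodup.getElem_inj_iff).mp (by rw [h, hsrep0])
  -- lexicographic comparison helpers
  have hdropc : ∀ (i : ℕ) (h : i < T.length), T.drop i = (T[i]'h) :: T.drop (i+1) :=
    fun i h => List.drop_eq_getElem_cons h
  have hlt_head : ∀ (i : ℕ) (h : i < T.length), T[i]'h < c → T.drop i < c :: T := by
    intro i h hlt
    rw [hdropc i h]
    exact cons_lt_cons_of_lt hlt _ _
  have hgt_head : ∀ (i : ℕ) (h : i < T.length), c < T[i]'h → ¬(T.drop i < c :: T) := by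
    intro i h hgt hcon
    rw [hdropc i h] at hcon
    exact absurd (List.head_le_of_lt hcon) (not_le.mpr hgt)
  have heq_head : ∀ (i : ℕ) (h : i < T.length), T[i]'h = c →
      (T.drop i < c :: T ↔ T.drop (i+1) < T) := by
    intro i h heq
    rw [hdropc i h, heq]
    exact cons_lt_cons_iff_of_eq c _ _
  -- the insertion predicate
  set p : ℕ → Bool := fun i => decide (T.drop i < c :: T) with hp_def
  set ins0 := s.countP p with hins0_def
  have hins0_le : ins0 ≤ T.length := by
    rw [hins0_def, ← hs_len]; exact List.countP_le_length (p := p)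
  have hdc : ∀ a b : ℕ, (T.drop a ≤ T.drop b) → p b = true → p a = true := by
    intro a b hab hb
    simp only [hp_def, decide_eq_true_eq] at hb ⊢
    exact lt_of_le_of_lt hab hb
  obtain ⟨htakeP, hdropP⟩ := take_countP_sorted hdc hs_sorted
  rw [← hins0_def] at htakeP hdropP
  -- setup for the extended string
  set le' : ℕ → ℕ → Bool := fun i j => decide ((c :: T).drop i ≤ (c :: T).drop j) with hle'_def
  set s' : List ℕ := (List.range (T.length + 1)).mergeSort le' with hs'_def
  set g : ℕ → α := fun i =>
    (c :: T).getD ((i + (T.length + 1) - 1) % (T.length + 1)) default with hg_def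
  have hbwt' : bwt (c :: T) = s'.map g := by
    simp only [bwt, List.length_cons]; rfl
  have hs'_sorted : s'.Pairwise (fun i j => le' i j = true) :=
    List.pairwise_mergeSort (le := le')
      (fun a b cc hab hbc => by
        simp only [hle'_def, decide_eq_true_eq] at hab hbc ⊢
        exact le_trans hab hbc)
      (fun a b => by
        simp only [hle'_def, Bool.or_eq_true, decide_eq_true_eq]
        exact le_total _ _)
      (List.range (T.length + 1))
  have hmlen : (s.map (· + 1)).length = T.length := by rw [List.length_map, hs_len]
  have hsucc_le' : ∀ i j : ℕ, (T.drop i ≤ T.drop j) ↔ (le' (i+1) (j+1) = true) := by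
    intro i j
    simp only [hle'_def, List.drop_succ_cons, decide_eq_true_eq]
  have hmsorted : (s.map (· + 1)).Pairwise (fun i j => le' i j = true) :=
    hs_sorted.map _ (fun a b h => (hsucc_le' a b).mp h)
  have hcand_pair : (List.take ins0 (s.map (· + 1)) ++
      0 :: List.drop ins0 (s.map (· + 1))).Pairwise (fun i j => le' i j = true) := by
    rw [List.pairwise_append]
    refine ⟨List.Pairwise.sublist (List.take_sublist _ _) hmsorted, ?_, ?_⟩
    · rw [List.pairwise_cons]
      constructor
      · intro x hx
        rw [← List.map_drop] at hx
        obtain ⟨i, hi, rfl⟩ := List.mem_map.mp hx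
        have hpi : p i = false := hdropP i hi
        have h1 : ¬ (T.drop i < c :: T) := by
          simpa [hp_def] using hpi
        have h2 : c :: T ≤ T.drop i := not_lt.mp h1
        simp only [hle'_def, decide_eq_true_eq, List.drop_succ_cons, List.drop_zero]
        exact h2
      · exact List.Pairwise.sublist (List.drop_sublist _ _) hmsorted
    · intro a ha b hb
      rw [← List.map_take] at ha
      obtain ⟨i, hi, rfl⟩ := List.mem_map.mp ha
      have hpi : T.drop i < c :: T := by
        have := htakeP i hi
        simpa [hp_def] using this
      rcases List.mem_cons.mp hb with rfl | hb
      · simp only [hle'_def, decide_eq_true_eq, List.drop_succ_cons, List.drop_zero]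
        exact le_of_lt hpi
      · rw [← List.map_drop] at hb
        obtain ⟨j, hj, rfl⟩ := List.mem_map.mp hb
        have hcross : T.drop i ≤ T.drop j := by
          have hp2 := hs_sorted
          rw [← List.take_append_drop ins0 s, List.pairwise_append] at hp2
          exact hp2.2.2 i hi j hj
        exact (hsucc_le' i j).mp hcross
  have hcand_perm : s'.Perm (List.take ins0 (s.map (· + 1)) ++
      0 :: List.drop ins0 (s.map (· + 1))) := by
    have h1 := insertIdx_eq_take_cons_drop' 0 ins0 (s.map (· + 1))
      (by rw [hmlen]; exact hins0_le)
    have h2 : List.range (T.length + 1) = 0 :: (List.range T.length).map (· + 1) := by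
      rw [List.range_succ_eq_map]
    have h3 : ((0 : ℕ) :: s.map (· + 1)).Perm
        (List.take ins0 (s.map (· + 1)) ++ 0 :: List.drop ins0 (s.map (· + 1))) := by
      rw [← h1]
      exact (List.perm_insertIdx 0 _ (by rw [hmlen]; exact hins0_le)).symm
    have h4 : (List.range (T.length + 1)).Perm (0 :: s.map (· + 1)) := by
      rw [h2]
      exact List.Perm.cons 0 ((hs_perm.map _).symm)
    exact ((List.mergeSort_perm _ _).trans h4).trans h3
  have hanti' : ∀ a ∈ s', ∀ b ∈ s', le' a b = true → le' b a = true → a = b := by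
    intro a ha b hb h1 h2
    have ha' : a < T.length + 1 := List.mem_range.mp ((List.mergeSort_perm _ _).subset ha)
    have hb' : b < T.length + 1 := List.mem_range.mp ((List.mergeSort_perm _ _).subset hb)
    simp only [hle'_def, decide_eq_true_eq] at h1 h2
    have heq := le_antisymm h1 h2
    have hlen := congrArg List.length heq
    simp only [List.length_drop, List.length_cons] at hlen
    omega
  have hs'_eq : s' = List.take ins0 (s.map (· + 1)) ++ 0 :: List.drop ins0 (s.map (· + 1)) :=
    perm_pairwise_eq hcand_perm hs'_sorted hcand_pair hanti'
  -- Step B : mapping the sorted suffixes to characters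
  have hg0 : g 0 = d := by
    have hmod : (0 + (T.length + 1) - 1) % (T.length + 1) = T.length := by
      have h : 0 + (T.length + 1) - 1 = T.length := by omega
      rw [h]
      exact Nat.mod_eq_of_lt (by omega)
    simp only [hg_def, hmod]
    have h2 : T.length = (T.length - 1) + 1 := by omega
    rw [h2, List.getD_cons_succ, List.getD_eq_getElem _ _ (by omega)]
    exact hd_idx (by omega)
  have hgsucc : ∀ i : ℕ, i < T.length → g (i + 1) = (c :: T).getD i default := by
    intro i hi
    simp only [hg_def]
    congr 1
    have h : i + 1 + (T.length + 1) - 1 = (T.length + 1) + i := by omega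
    rw [h, Nat.add_mod_left]
    exact Nat.mod_eq_of_lt (by omega)
  have hmap_eq : (s.map (· + 1)).map g = (s.map f).set rep c := by
    apply List.ext_getElem
    · simp [hs_len]
    · intro k h1 h2
      have hk : k < T.length := by
        rw [List.length_map, List.length_map, hs_len] at h1
        exact h1
      have hks : k < s.length := by rw [hs_len]; exact hk
      rw [List.getElem_map, List.getElem_map, List.getElem_set, List.getElem_map]
      have hskn : s[k]'hks < T.length := hs_mem _ (List.getElem_mem _)
      by_cases hkr : rep = k
      · subst hkr
        rw [if_pos rfl]
        have h0 : s[rep]'hks = 0 := hsrep0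
        rw [h0]
        rw [hgsucc 0 (by omega)]
        simp
      · rw [if_neg hkr]
        have hs0 : s[k]'hks ≠ 0 := fun h => hkr ((hrep_uniq k hks h).symm)
        rw [hgsucc _ hskn]
        obtain ⟨m, hm⟩ : ∃ m, s[k]'hks = m + 1 := ⟨s[k]'hks - 1, by omega⟩
        rw [hm, List.getD_cons_succ, hfi _ (by omega) (by omega)]
        simp
  have hB : bwt (c :: T) = List.take ins0 ((s.map f).set rep c) ++
      d :: List.drop ins0 ((s.map f).set rep c) := by
    rw [hbwt', hs'_eq, List.map_append, List.map_cons, hg0, List.map_take, List.map_drop,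
      hmap_eq]
  -- Step C : the insertion position
  set A : ℕ → Bool := fun i => decide (f i < c) with hA_def
  set B : ℕ → Bool := fun i => decide (f i = c) && decide (T.drop i ≤ T) with hB_def
  have hσ : (List.range T.length).map (fun i => (i + T.length - 1) % T.length) =
      (List.range T.length).rotate (T.length - 1) := by
    apply List.ext_getElem
    · simp
    · intro k h1 h2
      simp only [List.getElem_map, List.getElem_range, List.getElem_rotate, List.length_range]
      congr 1
      omega
  have hC1 : ins0 = List.countP (fun i => p ((i + T.length - 1) % T.length))
      (List.range T.length) := by
    rw [hins0_def, hs_perm.countP_eq p]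
    rw [← ((List.range T.length).rotate_perm (T.length - 1)).countP_eq p, ← hσ,
      List.countP_map]
    rfl
  have hAB : ∀ i : ℕ, i < T.length →
      p ((i + T.length - 1) % T.length) = (A i || B i) := by
    intro i hi
    have hj : (i + T.length - 1) % T.length < T.length := Nat.mod_lt _ (by omega)
    have hhead : T[(i + T.length - 1) % T.length]'hj = f i := by
      simp only [hf_def]
      rw [List.getD_eq_getElem _ _ hj]
    rcases lt_trichotomy (f i) c with hlt | heqc | hgt
    · have h1 := hlt_head _ hj (by rw [hhead]; exact hlt)
      simp [hp_def, hA_def, h1, hlt]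
    · have hi1 : 1 ≤ i := by
        by_contra h0
        have hi0 : i = 0 := by omega
        rw [hi0, hf0] at heqc
        exact absurd heqc (ne_of_lt hc)
      have hji : (i + T.length - 1) % T.length = i - 1 := by
        have h3 : i + T.length - 1 = (i - 1) + T.length := by omega
        rw [h3, Nat.add_mod_right]
        exact Nat.mod_eq_of_lt (by omega)
      have h2 := heq_head _ hj (by rw [hhead]; exact heqc)
      have hj1 : (i + T.length - 1) % T.length + 1 = i := by omega
      rw [hj1] at h2
      have hne2 : T.drop i ≠ T := by
        intro hh
        have hlen2 := congrArg List.length hh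
        simp only [List.length_drop] at hlen2
        omega
      have h4 : (T.drop i < T) ↔ (T.drop i ≤ T) :=
        ⟨le_of_lt, fun h => lt_of_le_of_ne h hne2⟩
      have h5 : ¬ (f i < c) := by rw [heqc]; exact lt_irrefl c
      simp only [hp_def, hA_def, hB_def]
      have hA0 : decide (f i < c) = false := by simp [h5]
      have hB1 : decide (f i = c) = true := by simp [heqc]
      rw [hA0, hB1, Bool.false_or, Bool.true_and, decide_eq_decide]
      exact h2.trans h4
    · have h1 := hgt_head _ hj (by rw [hhead]; exact hgt)
      have h5 : ¬ (f i < c) := not_lt.mpr (le_of_lt hgt)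
      have h6 : f i ≠ c := ne_of_gt hgt
      simp [hp_def, hA_def, hB_def, h1, h5, h6]
  have hC2 : List.countP (fun i => p ((i + T.length - 1) % T.length)) (List.range T.length)
      = List.countP A (List.range T.length) + List.countP B (List.range T.length) := by
    have hcg : List.countP (fun i => p ((i + T.length - 1) % T.length)) (List.range T.length)
        = List.countP (fun i => A i || B i) (List.range T.length) := by
      apply List.countP_congr
      intro x hx
      rw [hAB x (List.mem_range.mp hx)]
    rw [hcg]
    exact countP_or_disjoint A B _ (fun a ha h => by
      simp only [hA_def, hB_def, Bool.and_eq_true, decide_eq_true_eq] at h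
      exact absurd h.2.1 (ne_of_lt h.1))
  have hC5 : List.countP A (List.range T.length) =
      (bwt T).countP (fun x => decide (x < c)) := by
    rw [← hs_perm.countP_eq A, hbwt, List.countP_map]
    rfl
  have hC6 : List.countP B (List.range T.length) = ((bwt T).take (rep+1)).count c := by
    rw [← hs_perm.countP_eq B]
    have hsplit : List.countP B s =
        List.countP B (List.take (rep+1) s) + List.countP B (List.drop (rep+1) s) := by
      conv_lhs => rw [← List.take_append_drop (rep+1) s]
      rw [List.countP_append]
    have hdrop0 : List.countP B (List.drop (rep+1) s) = 0 := by
      rw [List.countP_eq_zero]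
      intro x hx hBx
      obtain ⟨kk, hkk, hkx⟩ := List.mem_iff_getElem.mp hx
      rw [List.getElem_drop] at hkx
      simp only [hB_def, Bool.and_eq_true, decide_eq_true_eq] at hBx
      have hlen' : rep + 1 + kk < s.length := by
        rw [List.length_drop] at hkk; omega
      have hord := (List.pairwise_iff_getElem.mp hs_sorted) rep (rep+1+kk) hreps hlen'
        (by omega)
      rw [hsrep0, hkx, List.drop_zero] at hord
      have hxn : x < T.length := hs_mem x ((List.drop_sublist _ _).subset hx)
      have hx0 : x = 0 := hanti x 0 (by omega) (by omega) hBx.2 (by simpa using hord)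
      have := hrep_uniq (rep+1+kk) hlen' (by rw [hkx, hx0])
      omega
    have htakeB : List.countP B (List.take (rep+1) s) =
        List.countP (fun i => decide (f i = c)) (List.take (rep+1) s) := by
      apply List.countP_congr
      intro x hx
      obtain ⟨kk, hkk, hkx⟩ := List.mem_iff_getElem.mp hx
      rw [List.getElem_take] at hkx
      have hkkb : kk < (rep + 1) ⊓ s.length := by rw [← List.length_take]; exact hkk
      have hkklt : kk < s.length := by omega
      simp only [hB_def, Bool.and_eq_true, decide_eq_true_eq]
      constructor
      · rintro ⟨h1, _⟩
        simpa using h1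
      · intro h1
        refine ⟨by simpa using h1, ?_⟩
        rcases Nat.lt_or_ge kk rep with hlt2 | hge2
        · have hord := (List.pairwise_iff_getElem.mp hs_sorted) kk rep hkklt hreps hlt2
          rw [hsrep0, List.drop_zero] at hord
          rw [← hkx]
          exact hord
        · exfalso
          have hkkr : kk = rep := by omega
          subst hkkr
          have hx0 : x = 0 := by rw [← hkx, hsrep0]
          rw [hx0, hf0] at h1
          exact absurd h1 (ne_of_lt hc)
    have hcount : ((bwt T).take (rep+1)).count c =
        List.countP (fun i => decide (f i = c)) (List.take (rep+1) s) := by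
      rw [hbwt, ← List.map_take, List.count_eq_countP, List.countP_map]
      apply List.countP_congr
      intro x hx
      simp [beq_iff_eq]
    omega
  have hK : (bwt T).countP (fun x => decide (x < c)) + ((bwt T).take (rep+1)).count c
      = ins0 := by
    rw [← hC5, ← hC6, ← hC2, ← hC1]
  -- final assembly
  rw [hK]
  rw [insertIdx_eq_take_cons_drop' d ins0 _ (by rw [List.length_set, hlen_bwt]; exact hins0_le)]
  rw [hbwt]
  exact hB
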